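/- arXiv:0806.1827 — 2 statements merged into one kernel-verified Lean document; each statement's English description precedes it below -/
import Mathlib

section
/- For all prime systems 𝒜 and ℬ, the map r ↦ |r|, where |r|(d) = {a | ∃X ⊆ d. (X,a) ∈ r}, is an order isomorphism from the domain (elements(𝒜 → ℬ), ⊆) onto the cpo ([elements(𝒜) → elements(ℬ)], ⊆) of Scott-continuous functions ordered pointwise, and its inverse is the map f ↦ Pr(f) = {(X,a) | X ∈ Ā and a ∈ f(↓X)}. In particular for every element r of 𝒜 → ℬ the function |r| is Scott-continuous, and for every monotonic f : elements(𝒜) → elements(ℬ) the set Pr(f) is an element of 𝒜 → ℬ. -/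
set_option autoImplicit false

namespace PrimeSys

universe u v

/-- The data of a prime system over a universe `α` of potential primes:
a set of primes, a consistency relation and an entailment relation. -/
structure PrimeData (α : Type u) where
  carrier : Set α
  con : α → α → Prop
  le : α → α → Prop

/-- `A` is a prime system: `con` and `le` are relations on the prime set `carrier`;
`con` is reflexive and symmetric; `le` is a partial order; and consistency is
inherited downwards: if `a ≍ b` and `c ≤ b` then `a ≍ c`. -/
structure IsPrimeSystem {α : Type u} (A : PrimeData α) : Prop where
  con_mem : ∀ a b, A.con a b → a ∈ A.carrier ∧ b ∈ A.carrier
  le_mem : ∀ a b, A.le a b → a ∈ A.carrier ∧ b ∈ A.carrier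
  con_refl : ∀ a ∈ A.carrier, A.con a a
  con_symm : ∀ a b, A.con a b → A.con b a
  le_refl : ∀ a ∈ A.carrier, A.le a a
  le_antisymm : ∀ a b, A.le a b → A.le b a → a = b
  le_trans : ∀ a b c, A.le a b → A.le b c → A.le a c
  con_dcl : ∀ a b c, A.con a b → A.le c b → A.con a c

namespace PrimeData

variable {α : Type u}

/-- The elements of a prime system: downward closed, pairwise consistent
subsets of the prime set. -/
def IsElement (A : PrimeData α) (d : Set α) : Prop :=
  d ⊆ A.carrier ∧ (∀ a b, A.le a b → b ∈ d → a ∈ d) ∧ ∀ a ∈ d, ∀ b ∈ d, A.con a b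

/-- The substructure relation `𝒜 ⊴ ℬ`: the prime set of `𝒜` is contained in that
of `ℬ`, and consistency and entailment of `𝒜` are the restrictions of those of `ℬ`. -/
def Sub (A B : PrimeData α) : Prop :=
  A.carrier ⊆ B.carrier ∧
  ∀ a ∈ A.carrier, ∀ b ∈ A.carrier, (A.con a b ↔ B.con a b) ∧ (A.le a b ↔ B.le a b)

end PrimeData

/-- The least prime system `(∅, ∅, ∅)`. -/
def botPD (α : Type u) : PrimeData α := ⟨∅, fun _ _ => False, fun _ _ => False⟩

/-- The union `⋃ᵢ 𝒜ᵢ = (⋃ᵢ Aᵢ, ⋃ᵢ ≍ᵢ, ⋃ᵢ ≤ᵢ)` of an ω-chain of prime systems. -/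
def chainUnion {α : Type u} (A : ℕ → PrimeData α) : PrimeData α where
  carrier := ⋃ i, (A i).carrier
  con a b := ∃ i, (A i).con a b
  le a b := ∃ i, (A i).le a b

/-- An ω-chain `𝒜₀ ⊴ 𝒜₁ ⊴ 𝒜₂ ⊴ …` of prime systems. -/
def IsPSChain {α : Type u} (A : ℕ → PrimeData α) : Prop :=
  (∀ i, IsPrimeSystem (A i)) ∧ ∀ i, (A i).Sub (A (i + 1))

end PrimeSys

namespace PrimeSys

universe u v

variable {α : Type u} {β : Type v}

/-- `Ā`: the finite, pairwise consistent, pairwise incomparable subsets of the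
prime set of `𝒜`. -/
def Abar (A : PrimeData α) : Set (Set α) :=
  {X | X.Finite ∧ X ⊆ A.carrier ∧ ∀ a ∈ X, ∀ b ∈ X, A.con a b ∧ (A.le a b → a = b)}

/-- The function-space prime system `𝒜 → ℬ`: its primes are the pairs `(X, a)` with
`X ∈ Ā` and `a` a prime of `ℬ`; `(X,a) ≍ (Y,b)` iff (`X ≍ Y` implies `a ≍_B b`);
`(X,a) ≤ (Y,b)` iff `Y ≤ X` and `a ≤_B b`. -/
def funcPD (A : PrimeData α) (B : PrimeData β) : PrimeData (Set α × β) where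
  carrier := {p | p.1 ∈ Abar A ∧ p.2 ∈ B.carrier}
  con p q :=
    (p.1 ∈ Abar A ∧ p.2 ∈ B.carrier) ∧ (q.1 ∈ Abar A ∧ q.2 ∈ B.carrier) ∧
    ((∀ a ∈ p.1, ∀ b ∈ q.1, A.con a b) → B.con p.2 q.2)
  le p q :=
    (p.1 ∈ Abar A ∧ p.2 ∈ B.carrier) ∧ (q.1 ∈ Abar A ∧ q.2 ∈ B.carrier) ∧
    (∀ a ∈ q.1, ∃ b ∈ p.1, A.le a b) ∧ B.le p.2 q.2

end PrimeSys

namespace PrimeSys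

universe u' v'

variable {α : Type u'} {β : Type v'}

/-- The function `|r|` associated with a set `r` of function-space primes:
`|r|(d) = {b ∣ ∃ X ⊆ d. (X, b) ∈ r}`. -/
def flr (r : Set (Set α × β)) (d : Set α) : Set β :=
  {b | ∃ X, X ⊆ d ∧ (X, b) ∈ r}

/-- The downward closure `↓X` of a set of primes in `𝒜`. -/
def downcl (A : PrimeData α) (X : Set α) : Set α := {a | ∃ x ∈ X, A.le a x}

/-- The prime set `Pr(f) = {(X, a) ∣ X ∈ Ā ∧ a ∈ f(↓X)}` of a function `f`. -/
def PrF (A : PrimeData α) (f : Set α → Set β) : Set (Set α × β) :=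
  {p | p.1 ∈ Abar A ∧ p.2 ∈ f (downcl A p.1)}

/-- `f` maps elements of `𝒜` to elements of `ℬ` and is monotonic on them. -/
def MonoOnElems (A : PrimeData α) (B : PrimeData β) (f : Set α → Set β) : Prop :=
  (∀ d, A.IsElement d → B.IsElement (f d)) ∧
  ∀ d e, A.IsElement d → A.IsElement e → d ⊆ e → f d ⊆ f e

/-- `f` is a Scott-continuous function from the domain of `𝒜` to the domain of `ℬ`:
it maps elements to elements, is monotonic, and preserves lubs (unions) of
directed nonempty sets of elements. -/
def ScottContOnElems (A : PrimeData α) (B : PrimeData β) (f : Set α → Set β) : Prop :=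
  MonoOnElems A B f ∧
  ∀ S : Set (Set α), S.Nonempty → (∀ d ∈ S, A.IsElement d) →
    DirectedOn (· ⊆ ·) S → f (⋃₀ S) = ⋃ d ∈ S, f d

lemma subset_downcl (A : PrimeData α) (hA : IsPrimeSystem A) {X : Set α}
    (hX : X ⊆ A.carrier) : X ⊆ downcl A X :=
  fun a ha => ⟨a, ha, hA.le_refl a (hX ha)⟩

lemma downcl_isElement (A : PrimeData α) (hA : IsPrimeSystem A) {X : Set α}
    (hX : X ⊆ A.carrier) (hcon : ∀ a ∈ X, ∀ b ∈ X, A.con a b) :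
    A.IsElement (downcl A X) := by
  refine ⟨?_, ?_, ?_⟩
  · rintro a ⟨x, _, hle⟩; exact (hA.le_mem _ _ hle).1
  · rintro a b hab ⟨x, hx, hle⟩; exact ⟨x, hx, hA.le_trans _ _ _ hab hle⟩
  · rintro a ⟨x, hx, hax⟩ b ⟨y, hy, hby⟩
    have h1 : A.con x b := hA.con_dcl _ _ _ (hcon x hx y hy) hby
    exact hA.con_symm _ _ (hA.con_dcl _ _ _ (hA.con_symm _ _ h1) hax)

lemma downcl_subset (A : PrimeData α) {d X : Set α} (hd : A.IsElement d)
    (hX : X ⊆ d) : downcl A X ⊆ d := by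
  rintro a ⟨x, hx, hle⟩; exact hd.2.1 _ _ hle (hX hx)

lemma downcl_union (A : PrimeData α) (X Y : Set α) :
    downcl A (X ∪ Y) = downcl A X ∪ downcl A Y := by
  ext a
  constructor
  · rintro ⟨x, hx | hx, h⟩
    · exact Or.inl ⟨x, hx, h⟩
    · exact Or.inr ⟨x, hx, h⟩
  · rintro (⟨x, hx, h⟩ | ⟨x, hx, h⟩)
    · exact ⟨x, Or.inl hx, h⟩
    · exact ⟨x, Or.inr hx, h⟩

/-- Key downward-closedness step: if `(Z, a) ∈ r` and `Z ⊆ ↓X` then `(X, a) ∈ r`. -/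
lemma funcPD_step (A : PrimeData α) (B : PrimeData β) (hA : IsPrimeSystem A)
    (hB : IsPrimeSystem B) {r : Set (Set α × β)} (hr : (funcPD A B).IsElement r)
    {X Z : Set α} {a : β} (hX : X ∈ Abar A) (hZr : (Z, a) ∈ r)
    (hZX : Z ⊆ downcl A X) : (X, a) ∈ r := by
  have hZc : Z ∈ Abar A ∧ a ∈ B.carrier := hr.1 hZr
  refine hr.2.1 (X, a) (Z, a) ?_ hZr
  exact ⟨⟨hX, hZc.2⟩, hZc, fun z hz => hZX hz, hB.le_refl _ hZc.2⟩

/-- In a finite subset of the primes, every element lies below a maximal one. -/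
lemma exists_maximal_of_finite (A : PrimeData α) (hA : IsPrimeSystem A) :
    ∀ n : ℕ, ∀ X : Set α, X ⊆ A.carrier → X.Finite → X.ncard ≤ n →
      ∀ a ∈ X, ∃ m ∈ X, A.le a m ∧ ∀ c ∈ X, A.le m c → m = c := by
  intro n
  induction n with
  | zero =>
    intro X _ hXf hcard a ha
    have : X = ∅ := (Set.ncard_eq_zero hXf).mp (Nat.le_zero.mp hcard)
    simp [this] at ha
  | succ n ih =>
    intro X hXc hXf hcard a ha
    by_cases hmax : ∀ c ∈ X, A.le a c → a = c
    · exact ⟨a, ha, hA.le_refl a (hXc ha), hmax⟩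
    · push_neg at hmax
      obtain ⟨c, hc, hac, hne⟩ := hmax
      have hcX' : c ∈ X \ {a} := ⟨hc, fun h => hne (Set.mem_singleton_iff.mp h).symm⟩
      have hlt : (X \ {a}).ncard < X.ncard := Set.ncard_diff_singleton_lt_of_mem ha hXf
      obtain ⟨m, hm, hcm, hmmax⟩ := ih (X \ {a}) (fun x hx => hXc hx.1)
        hXf.diff (by omega) c hcX'
      refine ⟨m, hm.1, hA.le_trans _ _ _ hac hcm, ?_⟩
      intro d hd hmd
      by_cases hda : d = a
      · subst hda
        have : m = d := hA.le_antisymm _ _ hmd (hA.le_trans _ _ _ hac hcm)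
        exact absurd (Set.mem_singleton_iff.mpr this) hm.2
      · exact hmmax d ⟨hd, fun h => hda (Set.mem_singleton_iff.mp h)⟩ hmd

/-- A finite subset of a directed union lies inside one member. -/
lemma finite_subset_directed {S : Set (Set α)} (hne : S.Nonempty)
    (hdir : DirectedOn (· ⊆ ·) S) {X : Set α} (hXf : X.Finite) (hXs : X ⊆ ⋃₀ S) :
    ∃ d ∈ S, X ⊆ d := by
  refine Set.Finite.induction_on (motive := fun X _ => X ⊆ ⋃₀ S → ∃ d ∈ S, X ⊆ d)
    X hXf ?_ ?_ hXs
  · intro _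
    obtain ⟨d, hd⟩ := hne
    exact ⟨d, hd, Set.empty_subset d⟩
  · intro a X _ _ ih hXs'
    obtain ⟨d, hdS, hXd⟩ := ih ((Set.subset_insert a X).trans hXs')
    obtain ⟨e, heS, hae⟩ := hXs' (Set.mem_insert a X)
    obtain ⟨f, hfS, hdf, hef⟩ := hdir d hdS e heS
    exact ⟨f, hfS, Set.insert_subset (hef hae) (hXd.trans hdf)⟩

/-- For all prime systems `𝒜`, `ℬ`, the map `r ↦ |r|` is an
order isomorphism from `(elements(𝒜 → ℬ), ⊆)` onto the cpo of Scott-continuous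
functions from `elements(𝒜)` to `elements(ℬ)` ordered pointwise, with inverse
`f ↦ Pr(f)`.  In particular `|r|` is Scott-continuous for every element `r` of
`𝒜 → ℬ`, and `Pr(f)` is an element of `𝒜 → ℬ` for every monotonic `f`. -/
theorem flr_orderIso (A : PrimeData α) (B : PrimeData β)
    (hA : IsPrimeSystem A) (hB : IsPrimeSystem B) :
    (∀ r, (funcPD A B).IsElement r → ScottContOnElems A B (flr r)) ∧
    (∀ f, MonoOnElems A B f → (funcPD A B).IsElement (PrF A f)) ∧
    (∀ r, (funcPD A B).IsElement r → PrF A (flr r) = r) ∧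
    (∀ f, ScottContOnElems A B f → ∀ d, A.IsElement d → flr (PrF A f) d = f d) ∧
    (∀ r s, (funcPD A B).IsElement r → (funcPD A B).IsElement s →
      (r ⊆ s ↔ ∀ d, A.IsElement d → flr r d ⊆ flr s d)) := by
  -- `|r| d` is an element of `ℬ` whenever `d` is an element of `𝒜`.
  have hflr_elem : ∀ r, (funcPD A B).IsElement r →
      ∀ d, A.IsElement d → B.IsElement (flr r d) := by
    intro r hr d hd
    refine ⟨?_, ?_, ?_⟩
    · rintro b ⟨X, _, hXr⟩
      exact (hr.1 hXr).2
    · rintro b b' hbb' ⟨X, hXd, hXr⟩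
      refine ⟨X, hXd, hr.2.1 (X, b) (X, b') ?_ hXr⟩
      have hc : X ∈ Abar A ∧ b' ∈ B.carrier := hr.1 hXr
      exact ⟨⟨hc.1, (hB.le_mem _ _ hbb').1⟩, hc,
        fun a ha => ⟨a, ha, hA.le_refl a (hc.1.2.1 ha)⟩, hbb'⟩
    · rintro b ⟨X, hXd, hXr⟩ b' ⟨Y, hYd, hYr⟩
      have hcon := hr.2.2 _ hXr _ hYr
      exact hcon.2.2 fun x hx y hy => hd.2.2 x (hXd hx) y (hYd hy)
  -- Part 1 : `|r|` is Scott-continuous.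
  have h1 : ∀ r, (funcPD A B).IsElement r → ScottContOnElems A B (flr r) := by
    intro r hr
    refine ⟨⟨hflr_elem r hr,
      fun d e _ _ hde b hb => hb.imp fun X hX => ⟨hX.1.trans hde, hX.2⟩⟩, ?_⟩
    intro S hSne hSel hSdir
    apply Set.Subset.antisymm
    · rintro b ⟨X, hXS, hXr⟩
      have hXf : X.Finite := (hr.1 hXr).1.1
      obtain ⟨d, hdS, hXd⟩ := finite_subset_directed hSne hSdir hXf hXS
      exact Set.mem_biUnion hdS ⟨X, hXd, hXr⟩
    · intro b hb
      obtain ⟨d, hdS, X, hXd, hXr⟩ := Set.mem_iUnion₂.mp hb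
      exact ⟨X, hXd.trans (Set.subset_sUnion_of_mem hdS), hXr⟩
  -- Part 2 : `Pr(f)` is an element of `𝒜 → ℬ` whenever `f` is monotonic.
  have h2 : ∀ f, MonoOnElems A B f → (funcPD A B).IsElement (PrF A f) := by
    intro f hf
    have hdX : ∀ X ∈ Abar A, A.IsElement (downcl A X) := fun X hX =>
      downcl_isElement A hA hX.2.1 fun a ha b hb => (hX.2.2 a ha b hb).1
    refine ⟨?_, ?_, ?_⟩
    · rintro ⟨X, a⟩ ⟨hX, haf⟩
      exact ⟨hX, (hf.1 _ (hdX X hX)).1 haf⟩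
    · rintro ⟨X, a⟩ ⟨Y, b⟩ hle hmem
      obtain ⟨⟨hX, _⟩, ⟨hY, _⟩, hYX, hab⟩ := hle
      refine ⟨hX, ?_⟩
      have hsub : downcl A Y ⊆ downcl A X := by
        rintro c ⟨y, hy, hcy⟩
        obtain ⟨x, hx, hyx⟩ := hYX y hy
        exact ⟨x, hx, hA.le_trans _ _ _ hcy hyx⟩
      have hbX : b ∈ f (downcl A X) := hf.2 _ _ (hdX Y hY) (hdX X hX) hsub hmem.2
      exact (hf.1 _ (hdX X hX)).2.1 _ _ hab hbX
    · rintro ⟨X, a⟩ ⟨hX, haf⟩ ⟨Y, b⟩ ⟨hY, hbf⟩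
      refine ⟨⟨hX, (hf.1 _ (hdX X hX)).1 haf⟩, ⟨hY, (hf.1 _ (hdX Y hY)).1 hbf⟩, ?_⟩
      intro hcon
      have hXY : A.IsElement (downcl A (X ∪ Y)) := by
        refine downcl_isElement A hA (Set.union_subset hX.2.1 hY.2.1) ?_
        rintro x (hx | hx) y (hy | hy)
        · exact (hX.2.2 x hx y hy).1
        · exact hcon x hx y hy
        · exact hA.con_symm _ _ (hcon y hy x hx)
        · exact (hY.2.2 x hx y hy).1
      rw [downcl_union] at hXY
      have ha' : a ∈ f (downcl A X ∪ downcl A Y) :=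
        hf.2 _ _ (hdX X hX) hXY Set.subset_union_left haf
      have hb' : b ∈ f (downcl A X ∪ downcl A Y) :=
        hf.2 _ _ (hdX Y hY) hXY Set.subset_union_right hbf
      exact (hf.1 _ hXY).2.2 a ha' b hb'
  -- Part 3 : `Pr(|r|) = r`.
  have h3 : ∀ r, (funcPD A B).IsElement r → PrF A (flr r) = r := by
    intro r hr
    ext ⟨X, a⟩
    constructor
    · rintro ⟨hX, Z, hZX, hZr⟩
      exact funcPD_step A B hA hB hr hX hZr hZX
    · intro h
      have hc : X ∈ Abar A ∧ a ∈ B.carrier := hr.1 h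
      exact ⟨hc.1, X, subset_downcl A hA hc.1.2.1, h⟩
  -- Part 4 : `|Pr(f)| = f` on elements, for Scott-continuous `f`.
  have h4 : ∀ f, ScottContOnElems A B f → ∀ d, A.IsElement d →
      flr (PrF A f) d = f d := by
    intro f hf d hd
    apply Set.Subset.antisymm
    · rintro b ⟨X, hXd, hX, hbf⟩
      exact hf.1.2 _ _ (downcl_isElement A hA (hXd.trans hd.1)
        fun a ha c hc => hd.2.2 a (hXd ha) c (hXd hc)) hd (downcl_subset A hd hXd) hbf
    · intro b hb
      set S : Set (Set α) := {e | ∃ X, X ∈ Abar A ∧ X ⊆ d ∧ e = downcl A X} with hSdef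
      have hmemS : ∀ X, X ∈ Abar A → X ⊆ d → downcl A X ∈ S :=
        fun X h1 h2 => ⟨X, h1, h2, rfl⟩
      have hels : ∀ e ∈ S, A.IsElement e := by
        rintro e ⟨X, hX, hXd, rfl⟩
        exact downcl_isElement A hA hX.2.1 fun a ha c hc => (hX.2.2 a ha c hc).1
      have hemp : (∅ : Set α) ∈ Abar A := ⟨Set.finite_empty, Set.empty_subset _, by simp⟩
      have hne : S.Nonempty := ⟨downcl A ∅, hmemS ∅ hemp (Set.empty_subset d)⟩
      have hdir : DirectedOn (· ⊆ ·) S := by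
        rintro e1 ⟨X1, hX1, hX1d, rfl⟩ e2 ⟨X2, hX2, hX2d, rfl⟩
        set Z : Set α := X1 ∪ X2 with hZdef
        have hZd : Z ⊆ d := Set.union_subset hX1d hX2d
        have hZc : Z ⊆ A.carrier := hZd.trans hd.1
        have hZf : Z.Finite := hX1.1.union hX2.1
        set M : Set α := {m ∈ Z | ∀ c ∈ Z, A.le m c → m = c} with hMdef
        have hMAbar : M ∈ Abar A := by
          refine ⟨hZf.subset fun m hm => hm.1, fun m hm => hZc hm.1, ?_⟩
          intro a ha c hc
          exact ⟨hd.2.2 a (hZd ha.1) c (hZd hc.1), fun hle => ha.2 c hc.1 hle⟩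
        have hZM : downcl A Z ⊆ downcl A M := by
          rintro z ⟨x, hx, hzx⟩
          obtain ⟨m, hm, hxm, hmmax⟩ := exists_maximal_of_finite A hA Z.ncard Z hZc hZf
            le_rfl x hx
          exact ⟨m, ⟨hm, hmmax⟩, hA.le_trans _ _ _ hzx hxm⟩
        refine ⟨downcl A M, hmemS M hMAbar (fun m hm => hZd hm.1), ?_, ?_⟩
        · intro z hz
          exact hZM (by rw [hZdef, downcl_union]; exact Or.inl hz)
        · intro z hz
          exact hZM (by rw [hZdef, downcl_union]; exact Or.inr hz)
      have hun : ⋃₀ S = d := by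
        apply Set.Subset.antisymm
        · rintro a ⟨e, ⟨X, _, hXd, rfl⟩, ha⟩
          exact downcl_subset A hd hXd ha
        · intro a ha
          have hsing : ({a} : Set α) ∈ Abar A := by
            refine ⟨Set.finite_singleton a, ?_, ?_⟩
            · intro x hx; rw [Set.mem_singleton_iff.mp hx]; exact hd.1 ha
            · intro x hx y hy
              rw [Set.mem_singleton_iff.mp hx, Set.mem_singleton_iff.mp hy]
              exact ⟨hA.con_refl a (hd.1 ha), fun _ => rfl⟩
          refine ⟨downcl A {a}, hmemS {a} hsing (by simpa using ha), ?_⟩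
          exact ⟨a, rfl, hA.le_refl a (hd.1 ha)⟩
      have hcont := hf.2 S hne hels hdir
      rw [hun] at hcont
      rw [hcont] at hb
      obtain ⟨e, heS, hbe⟩ := Set.mem_iUnion₂.mp hb
      obtain ⟨X, hX, hXd, rfl⟩ := heS
      exact ⟨X, hXd, hX, hbe⟩
  -- Part 5 : order isomorphism.
  refine ⟨h1, h2, h3, h4, ?_⟩
  intro r s hr hs
  constructor
  · rintro hrs d _ b ⟨X, hXd, hXr⟩
    exact ⟨X, hXd, hrs hXr⟩
  · rintro h ⟨X, a⟩ hp
    have hc : X ∈ Abar A ∧ a ∈ B.carrier := hr.1 hp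
    have hdX : A.IsElement (downcl A X) :=
      downcl_isElement A hA hc.1.2.1 fun x hx y hy => (hc.1.2.2 x hx y hy).1
    have ha : a ∈ flr s (downcl A X) :=
      h _ hdX ⟨X, subset_downcl A hA hc.1.2.1, hp⟩
    obtain ⟨Z, hZX, hZs⟩ := ha
    exact funcPD_step A B hA hB hs hc.1 hZs hZX

end PrimeSys
end

section
/- The function-space operation → on prime systems is continuous in each argument with respect to the substructure order ⊴, hence continuous as a binary operation: it is monotonic in both arguments, and for every ω-chain 𝒜₀ ⊴ 𝒜₁ ⊴ … and prime system ℬ, (⋃ᵢ𝒜ᵢ) → ℬ = ⋃ᵢ(𝒜ᵢ → ℬ) and ℬ → (⋃ᵢ𝒜ᵢ) = ⋃ᵢ(ℬ → 𝒜ᵢ). -/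
set_option autoImplicit false

namespace PrimeSys

universe u' v'



section MyHelpers

variable {γ : Type u'}

theorem myPD_ext (P Q : PrimeData γ) (h1 : P.carrier = Q.carrier)
    (h2 : P.con = Q.con) (h3 : P.le = Q.le) : P = Q := by
  cases P; cases Q; simp_all

theorem mySub_trans {A B C : PrimeData γ} (h1 : A.Sub B) (h2 : B.Sub C) : A.Sub C :=
  ⟨h1.1.trans h2.1, fun a ha b hb =>
    ⟨(h1.2 a ha b hb).1.trans (h2.2 a (h1.1 ha) b (h1.1 hb)).1,
     (h1.2 a ha b hb).2.trans (h2.2 a (h1.1 ha) b (h1.1 hb)).2⟩⟩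

theorem myChain_sub {A : ℕ → PrimeData γ} (hA : IsPSChain A) {i j : ℕ} (hij : i ≤ j) :
    (A i).Sub (A j) := by
  induction j, hij using Nat.le_induction with
  | base => exact ⟨subset_rfl, fun a _ b _ => ⟨Iff.rfl, Iff.rfl⟩⟩
  | succ n hn ih => exact mySub_trans ih (hA.2 n)

theorem myChain_con_iff {A : ℕ → PrimeData γ} (hA : IsPSChain A) {i : ℕ} {a b : γ}
    (ha : a ∈ (A i).carrier) (hb : b ∈ (A i).carrier) :
    (chainUnion A).con a b ↔ (A i).con a b := by
  constructor
  · rintro ⟨j, hj⟩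
    have hmem := (hA.1 j).con_mem a b hj
    have hk : (A (max i j)).con a b :=
      ((myChain_sub hA (le_max_right i j)).2 a hmem.1 b hmem.2).1.mp hj
    exact ((myChain_sub hA (le_max_left i j)).2 a ha b hb).1.mpr hk
  · exact fun h => ⟨i, h⟩

theorem myChain_le_iff {A : ℕ → PrimeData γ} (hA : IsPSChain A) {i : ℕ} {a b : γ}
    (ha : a ∈ (A i).carrier) (hb : b ∈ (A i).carrier) :
    (chainUnion A).le a b ↔ (A i).le a b := by
  constructor
  · rintro ⟨j, hj⟩
    have hmem := (hA.1 j).le_mem a b hj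
    have hk : (A (max i j)).le a b :=
      ((myChain_sub hA (le_max_right i j)).2 a hmem.1 b hmem.2).2.mp hj
    exact ((myChain_sub hA (le_max_left i j)).2 a ha b hb).2.mpr hk
  · exact fun h => ⟨i, h⟩

theorem myChain_finite_sub {A : ℕ → PrimeData γ} (hA : IsPSChain A) {X : Set γ}
    (hfin : X.Finite) (hsub : X ⊆ (chainUnion A).carrier) : ∃ i, X ⊆ (A i).carrier := by
  classical
  have hex : ∀ x ∈ X, ∃ i, x ∈ (A i).carrier := by
    intro x hx
    exact Set.mem_iUnion.mp (hsub hx)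
  set f : γ → ℕ := fun x => if h : ∃ i, x ∈ (A i).carrier then Nat.find h else 0 with hf
  obtain ⟨N, hN⟩ := (hfin.image f).bddAbove
  refine ⟨N, fun x hx => ?_⟩
  have h := hex x hx
  have hfx : x ∈ (A (f x)).carrier := by
    simp only [hf, dif_pos h]
    exact Nat.find_spec h
  have : f x ≤ N := hN ⟨x, hx, rfl⟩
  exact (myChain_sub hA this).1 hfx

theorem myAbar_mono {A A' : PrimeData γ} (h : A.Sub A') : Abar A ⊆ Abar A' := by
  rintro X ⟨hfin, hsub, hX⟩
  refine ⟨hfin, hsub.trans h.1, fun a ha b hb => ?_⟩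
  have hiff := h.2 a (hsub ha) b (hsub hb)
  exact ⟨hiff.1.mp (hX a ha b hb).1, fun hle => (hX a ha b hb).2 (hiff.2.mpr hle)⟩

theorem myChain_Abar {A : ℕ → PrimeData γ} (hA : IsPSChain A) :
    Abar (chainUnion A) = ⋃ i, Abar (A i) := by
  ext X
  simp only [Set.mem_iUnion]
  constructor
  · rintro ⟨hfin, hsub, hX⟩
    obtain ⟨i, hi⟩ := myChain_finite_sub hA hfin hsub
    exact ⟨i, hfin, hi, fun a ha b hb =>
      ⟨(myChain_con_iff hA (hi ha) (hi hb)).mp (hX a ha b hb).1,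
       fun hle => (hX a ha b hb).2 ⟨i, hle⟩⟩⟩
  · rintro ⟨i, hfin, hsub, hX⟩
    refine ⟨hfin, fun x hx => Set.mem_iUnion.mpr ⟨i, hsub hx⟩, fun a ha b hb => ?_⟩
    exact ⟨⟨i, (hX a ha b hb).1⟩,
      fun hle => (hX a ha b hb).2 ((myChain_le_iff hA (hsub ha) (hsub hb)).mp hle)⟩

end MyHelpers


/-- The function-space operation `→` on prime systems is
continuous in each argument with respect to `⊴`, hence continuous as a binary
operation: it is monotonic in both arguments, and for every ω-chain
`𝒜₀ ⊴ 𝒜₁ ⊴ …` and prime system `ℬ`, `(⋃ᵢ𝒜ᵢ) → ℬ = ⋃ᵢ(𝒜ᵢ → ℬ)` and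
`ℬ → (⋃ᵢ𝒜ᵢ) = ⋃ᵢ(ℬ → 𝒜ᵢ)`. -/
theorem funcPD_continuous {α : Type u'} {β : Type v'} :
    (∀ (A A' : PrimeData α) (B : PrimeData β),
      IsPrimeSystem A → IsPrimeSystem A' → IsPrimeSystem B →
      A.Sub A' → (funcPD A B).Sub (funcPD A' B)) ∧
    (∀ (A : PrimeData α) (B B' : PrimeData β),
      IsPrimeSystem A → IsPrimeSystem B → IsPrimeSystem B' →
      B.Sub B' → (funcPD A B).Sub (funcPD A B')) ∧
    (∀ (A : ℕ → PrimeData α) (B : PrimeData β), IsPSChain A → IsPrimeSystem B →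
      funcPD (chainUnion A) B = chainUnion (fun i => funcPD (A i) B)) ∧
    (∀ (B : PrimeData α) (A : ℕ → PrimeData β), IsPrimeSystem B → IsPSChain A →
      funcPD B (chainUnion A) = chainUnion (fun i => funcPD B (A i))) := by
  refine ⟨?_, ?_, ?_, ?_⟩
  · -- monotone in first argument
    intro A A' B _ _ _ h
    constructor
    · rintro ⟨X, b⟩ ⟨hX, hb⟩
      exact ⟨myAbar_mono h hX, hb⟩
    · rintro p ⟨hp1, hp2⟩ q ⟨hq1, hq2⟩
      have hp1' := myAbar_mono h hp1
      have hq1' := myAbar_mono h hq1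
      have hpair : ∀ a ∈ p.1, ∀ b ∈ q.1,
          (A.con a b ↔ A'.con a b) ∧ (A.le a b ↔ A'.le a b) :=
        fun a ha b hb => h.2 a (hp1.2.1 ha) b (hq1.2.1 hb)
      have hpair' : ∀ a ∈ q.1, ∀ b ∈ p.1,
          (A.con a b ↔ A'.con a b) ∧ (A.le a b ↔ A'.le a b) :=
        fun a ha b hb => h.2 a (hq1.2.1 ha) b (hp1.2.1 hb)
      constructor
      · constructor
        · rintro ⟨_, _, h3⟩
          exact ⟨⟨hp1', hp2⟩, ⟨hq1', hq2⟩,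
            fun hc => h3 fun a ha b hb => (hpair a ha b hb).1.mpr (hc a ha b hb)⟩
        · rintro ⟨_, _, h3⟩
          exact ⟨⟨hp1, hp2⟩, ⟨hq1, hq2⟩,
            fun hc => h3 fun a ha b hb => (hpair a ha b hb).1.mp (hc a ha b hb)⟩
      · constructor
        · rintro ⟨_, _, h3, h4⟩
          refine ⟨⟨hp1', hp2⟩, ⟨hq1', hq2⟩, fun a ha => ?_, h4⟩
          obtain ⟨b, hb, hle⟩ := h3 a ha
          exact ⟨b, hb, (hpair' a ha b hb).2.mp hle⟩
        · rintro ⟨_, _, h3, h4⟩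
          refine ⟨⟨hp1, hp2⟩, ⟨hq1, hq2⟩, fun a ha => ?_, h4⟩
          obtain ⟨b, hb, hle⟩ := h3 a ha
          exact ⟨b, hb, (hpair' a ha b hb).2.mpr hle⟩
  · -- monotone in second argument
    intro A B B' _ _ _ h
    constructor
    · rintro ⟨X, b⟩ ⟨hX, hb⟩
      exact ⟨hX, h.1 hb⟩
    · rintro p ⟨hp1, hp2⟩ q ⟨hq1, hq2⟩
      have hiff := h.2 p.2 hp2 q.2 hq2
      constructor
      · exact ⟨fun ⟨_, _, h3⟩ => ⟨⟨hp1, h.1 hp2⟩, ⟨hq1, h.1 hq2⟩, fun hc => hiff.1.mp (h3 hc)⟩,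
          fun ⟨_, _, h3⟩ => ⟨⟨hp1, hp2⟩, ⟨hq1, hq2⟩, fun hc => hiff.1.mpr (h3 hc)⟩⟩
      · exact ⟨fun ⟨_, _, h3, h4⟩ => ⟨⟨hp1, h.1 hp2⟩, ⟨hq1, h.1 hq2⟩, h3, hiff.2.mp h4⟩,
          fun ⟨_, _, h3, h4⟩ => ⟨⟨hp1, hp2⟩, ⟨hq1, hq2⟩, h3, hiff.2.mpr h4⟩⟩
  · -- continuity in the first argument
    intro A B hA _
    have hAb : ∀ X : Set α, X ∈ Abar (chainUnion A) ↔ ∃ i, X ∈ Abar (A i) := by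
      intro X; rw [myChain_Abar hA]; exact Set.mem_iUnion
    apply myPD_ext
    · ext p
      constructor
      · rintro ⟨hX, hb⟩
        obtain ⟨i, hi⟩ := (hAb p.1).mp hX
        exact Set.mem_iUnion.mpr ⟨i, hi, hb⟩
      · intro hp
        obtain ⟨i, hi, hb⟩ := Set.mem_iUnion.mp hp
        exact ⟨(hAb p.1).mpr ⟨i, hi⟩, hb⟩
    · funext p q
      apply propext
      constructor
      · rintro ⟨⟨hpX, hpb⟩, ⟨hqX, hqb⟩, h3⟩
        obtain ⟨i, hpi⟩ := (hAb p.1).mp hpX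
        obtain ⟨j, hqj⟩ := (hAb q.1).mp hqX
        exact ⟨max i j, ⟨myAbar_mono (myChain_sub hA (le_max_left i j)) hpi, hpb⟩,
          ⟨myAbar_mono (myChain_sub hA (le_max_right i j)) hqj, hqb⟩,
          fun hc => h3 fun a ha b hb => ⟨max i j, hc a ha b hb⟩⟩
      · rintro ⟨i, ⟨hpX, hpb⟩, ⟨hqX, hqb⟩, h3⟩
        exact ⟨⟨(hAb p.1).mpr ⟨i, hpX⟩, hpb⟩, ⟨(hAb q.1).mpr ⟨i, hqX⟩, hqb⟩,
          fun hc => h3 fun a ha b hb =>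
            (myChain_con_iff hA (hpX.2.1 ha) (hqX.2.1 hb)).mp (hc a ha b hb)⟩
    · funext p q
      apply propext
      constructor
      · rintro ⟨⟨hpX, hpb⟩, ⟨hqX, hqb⟩, h3, h4⟩
        obtain ⟨i, hpi⟩ := (hAb p.1).mp hpX
        obtain ⟨j, hqj⟩ := (hAb q.1).mp hqX
        have hpk := myAbar_mono (myChain_sub hA (le_max_left i j)) hpi
        have hqk := myAbar_mono (myChain_sub hA (le_max_right i j)) hqj
        refine ⟨max i j, ⟨hpk, hpb⟩, ⟨hqk, hqb⟩, fun a ha => ?_, h4⟩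
        obtain ⟨b, hb, hle⟩ := h3 a ha
        exact ⟨b, hb, (myChain_le_iff hA (hqk.2.1 ha) (hpk.2.1 hb)).mp hle⟩
      · rintro ⟨i, ⟨hpX, hpb⟩, ⟨hqX, hqb⟩, h3, h4⟩
        refine ⟨⟨(hAb p.1).mpr ⟨i, hpX⟩, hpb⟩, ⟨(hAb q.1).mpr ⟨i, hqX⟩, hqb⟩,
          fun a ha => ?_, h4⟩
        obtain ⟨b, hb, hle⟩ := h3 a ha
        exact ⟨b, hb, ⟨i, hle⟩⟩
  · -- continuity in the second argument
    intro B A hB hA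
    apply myPD_ext
    · ext p
      constructor
      · rintro ⟨hX, hb⟩
        obtain ⟨i, hbi⟩ := Set.mem_iUnion.mp hb
        exact Set.mem_iUnion.mpr ⟨i, hX, hbi⟩
      · intro hp
        obtain ⟨i, hX, hbi⟩ := Set.mem_iUnion.mp hp
        exact ⟨hX, Set.mem_iUnion.mpr ⟨i, hbi⟩⟩
    · funext p q
      apply propext
      constructor
      · rintro ⟨⟨hpX, hpb⟩, ⟨hqX, hqb⟩, h3⟩
        obtain ⟨i, hpi⟩ := Set.mem_iUnion.mp hpb
        obtain ⟨j, hqj⟩ := Set.mem_iUnion.mp hqb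
        by_cases hc : ∀ a ∈ p.1, ∀ b ∈ q.1, B.con a b
        · obtain ⟨j', hcon⟩ := h3 hc
          have hm := (hA.1 j').con_mem _ _ hcon
          exact ⟨max j' (max i j),
            ⟨hpX, (myChain_sub hA (le_max_left _ _)).1 hm.1⟩,
            ⟨hqX, (myChain_sub hA (le_max_left _ _)).1 hm.2⟩,
            fun _ => ((myChain_sub hA (le_max_left j' (max i j))).2 _ hm.1 _ hm.2).1.mp hcon⟩
        · exact ⟨max i j,
            ⟨hpX, (myChain_sub hA (le_max_left i j)).1 hpi⟩,
            ⟨hqX, (myChain_sub hA (le_max_right i j)).1 hqj⟩,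
            fun hc' => absurd hc' hc⟩
      · rintro ⟨i, ⟨hpX, hpb⟩, ⟨hqX, hqb⟩, h3⟩
        exact ⟨⟨hpX, Set.mem_iUnion.mpr ⟨i, hpb⟩⟩, ⟨hqX, Set.mem_iUnion.mpr ⟨i, hqb⟩⟩,
          fun hc => ⟨i, h3 hc⟩⟩
    · funext p q
      apply propext
      constructor
      · rintro ⟨⟨hpX, hpb⟩, ⟨hqX, hqb⟩, h3, h4⟩
        obtain ⟨j, hle⟩ := h4
        have hm := (hA.1 j).le_mem _ _ hle
        exact ⟨j, ⟨hpX, hm.1⟩, ⟨hqX, hm.2⟩, h3, hle⟩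
      · rintro ⟨i, ⟨hpX, hpb⟩, ⟨hqX, hqb⟩, h3, h4⟩
        exact ⟨⟨hpX, Set.mem_iUnion.mpr ⟨i, hpb⟩⟩, ⟨hqX, Set.mem_iUnion.mpr ⟨i, hqb⟩⟩,
          h3, ⟨i, h4⟩⟩

end PrimeSys
end
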